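/- arXiv:2003.09826 — 5 statements merged into one kernel-verified Lean document; each statement's English description precedes it below -/
import Mathlib

section
/- For positive reals a, b and α ∈ [0,1], with r₀ = min{α, 1-α}, one has a^α b^(1-α) ≤ α a + (1-α) b − r₀ (√a − √b)². -/
lemma aux_kittaneh (a b α : ℝ) (ha : 0 < a) (hb : 0 < b) (h0 : 0 ≤ α) (h2 : α ≤ 1/2) :
    a ^ α * b ^ (1 - α) ≤ α * a + (1 - α) * b - α * (Real.sqrt a - Real.sqrt b) ^ 2 := by
  have hsa := Real.sq_sqrt ha.le
  have hsb := Real.sq_sqrt hb.le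
  have key : (Real.sqrt a * Real.sqrt b) ^ (2*α) * b ^ (1 - 2*α) ≤
      (2*α) * (Real.sqrt a * Real.sqrt b) + (1 - 2*α) * b := by
    apply Real.geom_mean_le_arith_mean2_weighted (by linarith) (by linarith)
      (by positivity) hb.le (by ring)
  have hlhs : a ^ α * b ^ (1 - α) = (Real.sqrt a * Real.sqrt b) ^ (2*α) * b ^ (1 - 2*α) := by
    rw [Real.mul_rpow (Real.sqrt_nonneg a) (Real.sqrt_nonneg b)]
    rw [show (Real.sqrt a) ^ (2*α) = ((Real.sqrt a)^(2:ℕ)) ^ α by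
      rw [← Real.rpow_natCast _ 2, ← Real.rpow_mul (Real.sqrt_nonneg a)]; norm_num]
    rw [show (Real.sqrt b) ^ (2*α) = ((Real.sqrt b)^(2:ℕ)) ^ α by
      rw [← Real.rpow_natCast _ 2, ← Real.rpow_mul (Real.sqrt_nonneg b)]; norm_num]
    rw [hsa, hsb, mul_assoc, ← Real.rpow_add hb]
    ring_nf
  rw [hlhs]
  nlinarith [key, hsa, hsb]

/-- Kittaneh's refinement of the Young inequality for scalars. -/
theorem kittaneh_refined_young (a b α : ℝ) (ha : 0 < a) (hb : 0 < b)
    (hα : α ∈ Set.Icc (0 : ℝ) 1) :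
    a ^ α * b ^ (1 - α) ≤
      α * a + (1 - α) * b - min α (1 - α) * (Real.sqrt a - Real.sqrt b) ^ 2 := by
  obtain ⟨h0, h1⟩ := hα
  rcases le_or_gt α (1/2) with h | h
  · rw [min_eq_left (by linarith)]
    exact aux_kittaneh a b α ha hb h0 h
  · rw [min_eq_right (by linarith)]
    have := aux_kittaneh b a (1-α) hb ha (by linarith) (by linarith)
    simp only [sub_sub_cancel] at this
    calc a ^ α * b ^ (1 - α) = b ^ (1-α) * a ^ α := by ring
      _ ≤ (1-α) * b + α * a - (1-α) * (Real.sqrt b - Real.sqrt a)^2 := this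
      _ = α * a + (1 - α) * b - (1 - α) * (Real.sqrt a - Real.sqrt b) ^ 2 := by ring
end

section
/- Let A be a positive bounded operator on a complex Hilbert space H and x ∈ H. If p ≥ 1 then ⟨A^p x, x⟩ ≥ ‖x‖^(2(1-p)) ⟨A x, x⟩^p. -/
open scoped InnerProductSpace NNReal

/-- Tangent line inequality for `t ^ p`, `p ≥ 1`: convexity of `rpow`. -/
lemma mccarthy_tangent {s t p : ℝ} (hs : 0 < s) (ht : 0 ≤ t) (hp : 1 ≤ p) :
    p * s ^ (p - 1) * t + (1 - p) * s ^ p ≤ t ^ p := by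
  have hu : -1 ≤ t / s - 1 := by
    have : 0 ≤ t / s := div_nonneg ht hs.le
    linarith
  have hB := one_add_mul_self_le_rpow_one_add hu hp
  rw [add_sub_cancel] at hB
  have hsp : 0 < s ^ p := Real.rpow_pos_of_pos hs p
  have hB' := mul_le_mul_of_nonneg_left hB hsp.le
  have hdiv : s ^ p * (t / s) ^ p = t ^ p := by
    rw [Real.div_rpow ht hs.le]
    field_simp
  have hsub : s ^ (p - 1) = s ^ p / s := by
    rw [Real.rpow_sub hs, Real.rpow_one]
  rw [hdiv] at hB'
  calc p * s ^ (p - 1) * t + (1 - p) * s ^ p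
      = s ^ p * (1 + p * (t / s - 1)) := by
        rw [hsub]; field_simp; ring
    _ ≤ t ^ p := hB'

/-- McCarthy inequality: for a positive operator `A` and `p ≥ 1`,
`⟨A^p x, x⟩ ≥ ‖x‖^(2(1-p)) ⟨A x, x⟩^p`. -/
theorem mccarthy_ge {H : Type*} [NormedAddCommGroup H] [InnerProductSpace ℂ H]
    [CompleteSpace H] (A : H →L[ℂ] H) (hA : 0 ≤ A) (x : H) (p : ℝ) (hp : 1 ≤ p) :
    ‖x‖ ^ (2 * (1 - p)) * (⟪A x, x⟫_ℂ).re ^ p ≤ (⟪(CFC.rpow A p) x, x⟫_ℂ).re := by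
  have hp0 : (0 : ℝ) < p := lt_of_lt_of_le one_pos hp
  have hre_nonneg : ∀ (T : H →L[ℂ] H), 0 ≤ T → 0 ≤ (⟪T x, x⟫_ℂ).re := fun T hT =>
    ((ContinuousLinearMap.nonneg_iff_isPositive T).mp hT).re_inner_nonneg_left x
  have hc : 0 ≤ (⟪A x, x⟫_ℂ).re := hre_nonneg A hA
  set c := (⟪A x, x⟫_ℂ).re with hcdef
  rcases eq_or_lt_of_le hc with hc0 | hcpos
  · rw [← hc0, Real.zero_rpow (ne_of_gt hp0), mul_zero]
    exact hre_nonneg _ CFC.rpow_nonneg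
  · -- main case : c > 0, hence x ≠ 0
    have hx : x ≠ 0 := by
      rintro rfl
      simp at hcdef
      rw [hcdef] at hcpos
      exact lt_irrefl 0 hcpos
    have hxn : (0 : ℝ) < ‖x‖ := norm_pos_iff.mpr hx
    have hn : (0 : ℝ) < ‖x‖ ^ 2 := by positivity
    set n : ℝ := ‖x‖ ^ 2 with hndef
    set s : ℝ := c / n with hsdef
    have hs : 0 < s := div_pos hcpos hn
    -- the operator inequality from the tangent line
    have hA' : (0 : H →L[ℂ] H) ≤ A := hA
    have hAsa : IsSelfAdjoint A := .of_nonneg hA'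
    have hrpow_eq : CFC.rpow A p
        = cfc (fun t : ℝ => ((t.toNNReal ^ p : ℝ≥0) : ℝ)) A := by
      rw [CFC.rpow, cfc_nnreal_eq_real (fun y : ℝ≥0 => y ^ p) A hA']
    have hcont : ContinuousOn (fun t : ℝ => ((t.toNNReal ^ p : ℝ≥0) : ℝ))
        (spectrum ℝ A) :=
      (NNReal.continuous_coe.comp ((NNReal.continuous_rpow_const hp0.le).comp
        continuous_real_toNNReal)).continuousOn
    have hkey : (p * s ^ (p - 1)) • A + ((1 - p) * s ^ p) • (1 : H →L[ℂ] H)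
        ≤ CFC.rpow A p := by
      rw [hrpow_eq]
      have h1 : cfc (fun t : ℝ => p * s ^ (p - 1) * t + (1 - p) * s ^ p) A
          = (p * s ^ (p - 1)) • A + ((1 - p) * s ^ p) • (1 : H →L[ℂ] H) := by
        rw [cfc_add (f := fun t : ℝ => p * s ^ (p - 1) * t)
            (g := fun _ : ℝ => (1 - p) * s ^ p) A (by fun_prop) (by fun_prop),
          cfc_const_mul_id _ A hAsa, cfc_const _ A hAsa, Algebra.algebraMap_eq_smul_one]
      rw [← h1]
      refine cfc_mono (fun t ht => ?_) (by fun_prop) hcont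
      have ht0 : 0 ≤ t := spectrum_nonneg_of_nonneg hA' ht
      rw [NNReal.coe_rpow, Real.coe_toNNReal t ht0]
      exact mccarthy_tangent hs ht0 hp
    -- take expectations
    have hpos := ((ContinuousLinearMap.nonneg_iff_isPositive _).mp
      (sub_nonneg.mpr hkey)).re_inner_nonneg_left x
    simp only [RCLike.re_to_complex] at hpos
    have hexp : (⟪(CFC.rpow A p - ((p * s ^ (p - 1)) • A
        + ((1 - p) * s ^ p) • (1 : H →L[ℂ] H))) x, x⟫_ℂ).re
        = (⟪(CFC.rpow A p) x, x⟫_ℂ).re - (p * s ^ (p - 1) * c + (1 - p) * s ^ p * n) := by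
      simp only [ContinuousLinearMap.sub_apply, ContinuousLinearMap.add_apply,
        ContinuousLinearMap.smul_apply, ContinuousLinearMap.one_apply,
        inner_sub_left, inner_add_left]
      rw [show ((p * s ^ (p - 1)) • A x : H) = ((p * s ^ (p - 1) : ℝ) : ℂ) • A x from rfl,
        show (((1 - p) * s ^ p) • x : H) = (((1 - p) * s ^ p : ℝ) : ℂ) • x from rfl,
        inner_smul_left, inner_smul_left, Complex.conj_ofReal, Complex.conj_ofReal]
      simp only [Complex.sub_re, Complex.add_re, Complex.mul_re,
        Complex.ofReal_re, Complex.ofReal_im, zero_mul, sub_zero]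
      have hxx : (⟪x, x⟫_ℂ).re = n := by
        simpa using inner_self_eq_norm_sq (𝕜 := ℂ) x
      rw [hxx, ← hcdef]
    rw [hexp, sub_nonneg] at hpos
    refine le_trans (le_of_eq ?_) hpos
    -- arithmetic: ‖x‖ ^ (2 * (1 - p)) * c ^ p = p * s^(p-1) * c + (1-p) * s^p * n
    have hsp1 : s ^ p = s ^ (p - 1) * s := by
      rw [Real.rpow_sub hs, Real.rpow_one]; field_simp
    have hsn : s * n = c := by
      rw [hsdef]; field_simp
    have hnorm : ‖x‖ ^ (2 * (1 - p)) = n ^ (1 - p) := by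
      rw [hndef, ← Real.rpow_natCast ‖x‖ 2, ← Real.rpow_mul (norm_nonneg x)]
      norm_num
    have hsp2 : s ^ (p - 1) = c ^ (p - 1) / n ^ (p - 1) := by
      rw [hsdef, Real.div_rpow hcpos.le hn.le]
    have hcp : c ^ (p - 1) * c = c ^ p := by
      rw [Real.rpow_sub hcpos, Real.rpow_one]; field_simp
    have hn1p : n ^ (1 - p) = 1 / n ^ (p - 1) := by
      rw [show (1 - p : ℝ) = -(p - 1) by ring, Real.rpow_neg hn.le]
      exact (one_div _).symm
    calc ‖x‖ ^ (2 * (1 - p)) * c ^ p = n ^ (1 - p) * c ^ p := by rw [hnorm]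
      _ = s ^ (p - 1) * c := by
          rw [hsp2, hn1p, ← hcp]; ring
      _ = p * s ^ (p - 1) * c + (1 - p) * s ^ p * n := by
          rw [hsp1, ← mul_assoc, mul_assoc ((1-p) * s ^ (p-1)) s n, hsn]; ring
end

section
/- Let A be a positive bounded operator on a complex Hilbert space H and x ∈ H. If 0 < p < 1 then ⟨A^p x, x⟩ ≤ ‖x‖^(2(1-p)) ⟨A x, x⟩^p. -/
open scoped InnerProductSpace NNReal

private lemma mccarthy_scalar (p : ℝ) (hp0 : 0 < p) (hp1 : p < 1) (lam : ℝ≥0)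
    (hlam : 0 < lam) (t : ℝ≥0) :
    t ^ p ≤ (1-p).toNNReal * lam ^ p + (p.toNNReal * lam ^ (p-1)) * t := by
  have h1p : (0:ℝ) ≤ 1 - p := by linarith
  have hg := NNReal.geom_mean_le_arith_mean2_weighted p.toNNReal (1-p).toNNReal t lam
    (by ext; simp [Real.toNNReal_of_nonneg hp0.le, Real.toNNReal_of_nonneg h1p])
  rw [Real.coe_toNNReal _ hp0.le, Real.coe_toNNReal _ h1p] at hg
  have hg2 := mul_le_mul_left hg (lam ^ (p-1))
  calc t ^ p = t ^ p * lam ^ (1-p) * lam ^ (p-1) := by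
        rw [mul_assoc, ← NNReal.rpow_add hlam.ne']; norm_num
    _ ≤ (p.toNNReal * t + (1-p).toNNReal * lam) * lam ^ (p-1) := hg2
    _ = (1-p).toNNReal * lam ^ p + (p.toNNReal * lam ^ (p-1)) * t := by
        rw [add_mul, mul_assoc, mul_assoc, mul_comm t, ← mul_assoc]
        have : lam * lam ^ (p-1) = lam ^ p := by
          nth_rewrite 1 [← NNReal.rpow_one lam]
          rw [← NNReal.rpow_add hlam.ne']; norm_num
        rw [this]; ring

private lemma mccarthy_op {H : Type*} [NormedAddCommGroup H] [InnerProductSpace ℂ H]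
    [CompleteSpace H] (A : H →L[ℂ] H) (hA : 0 ≤ A) (c₁ c₂ : ℝ≥0) (p : ℝ) (hp0 : 0 < p)
    (h : ∀ t ∈ spectrum ℝ≥0 A, t ^ p ≤ c₁ + c₂ * t) :
    CFC.rpow A p ≤ c₁ • (1 : H →L[ℂ] H) + c₂ • A := by
  have hcont : ContinuousOn (fun t : ℝ≥0 => t ^ p) (spectrum ℝ≥0 A) :=
    (NNReal.continuous_rpow_const hp0.le).continuousOn
  calc CFC.rpow A p = cfc (fun t : ℝ≥0 => t ^ p) A := rfl
    _ ≤ cfc (fun t : ℝ≥0 => c₁ + c₂ * t) A := cfc_mono h hcont (by fun_prop)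
    _ = c₁ • 1 + c₂ • A := by
        rw [cfc_add (a := A) (fun _ => c₁) (fun t => c₂ * t), cfc_const c₁ A,
          cfc_const_mul c₂ (fun t : ℝ≥0 => t) A, cfc_id' ℝ≥0 A,
          Algebra.algebraMap_eq_smul_one]

private lemma mccarthy_inner_le {H : Type*} [NormedAddCommGroup H] [InnerProductSpace ℂ H]
    [CompleteSpace H] (B C : H →L[ℂ] H) (h : B ≤ C) (x : H) :
    (⟪B x, x⟫_ℂ).re ≤ (⟪C x, x⟫_ℂ).re := by
  have h0 := ((ContinuousLinearMap.le_def B C).mp h).inner_nonneg_left x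
  simp only [ContinuousLinearMap.sub_apply, inner_sub_left, map_sub, RCLike.re_to_complex] at h0
  have h1 := (Complex.le_def.mp h0).1
  simp only [Complex.zero_re, Complex.sub_re] at h1
  linarith

private lemma mccarthy_inner_eq {H : Type*} [NormedAddCommGroup H] [InnerProductSpace ℂ H]
    [CompleteSpace H] (A : H →L[ℂ] H) (c₁ c₂ : ℝ≥0) (x : H) :
    (⟪(c₁ • (1 : H →L[ℂ] H) + c₂ • A) x, x⟫_ℂ).re
      = (c₁ : ℝ) * ‖x‖ ^ 2 + (c₂ : ℝ) * (⟪A x, x⟫_ℂ).re := by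
  have hs : ∀ (c : ℝ≥0) (y : H), (c • y : H) = ((c : ℝ) : ℂ) • y := by
    intro c y
    rw [NNReal.smul_def, ← algebraMap_smul ℂ (c : ℝ) y]
    rfl
  simp only [ContinuousLinearMap.add_apply, ContinuousLinearMap.smul_apply,
    ContinuousLinearMap.one_apply, inner_add_left, hs, inner_smul_left, Complex.conj_ofReal,
    Complex.add_re, Complex.mul_re, Complex.ofReal_re, Complex.ofReal_im]
  rw [← inner_self_eq_norm_sq (𝕜 := ℂ) x]
  simp [RCLike.re_to_complex]

/-- McCarthy inequality: for a positive operator `A` and `0 < p < 1`,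
`⟨A^p x, x⟩ ≤ ‖x‖^(2(1-p)) ⟨A x, x⟩^p`. -/
theorem mccarthy_le {H : Type*} [NormedAddCommGroup H] [InnerProductSpace ℂ H]
    [CompleteSpace H] (A : H →L[ℂ] H) (hA : 0 ≤ A) (x : H) (p : ℝ)
    (hp0 : 0 < p) (hp1 : p < 1) :
    (⟪(CFC.rpow A p) x, x⟫_ℂ).re ≤ ‖x‖ ^ (2 * (1 - p)) * (⟪A x, x⟫_ℂ).re ^ p := by
  have h1p : (0:ℝ) ≤ 1 - p := by linarith
  set c : ℝ := (⟪A x, x⟫_ℂ).re with hc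
  have hc0 : 0 ≤ c := by
    have := ((ContinuousLinearMap.nonneg_iff_isPositive A).mp hA).inner_nonneg_left x
    simpa [RCLike.re_to_complex] using (Complex.le_def.mp this).1
  have key : ∀ lam : ℝ≥0, 0 < lam →
      (⟪(CFC.rpow A p) x, x⟫_ℂ).re ≤
        (1-p) * (lam:ℝ) ^ p * ‖x‖ ^ 2 + p * (lam:ℝ) ^ (p-1) * c := by
    intro lam hlam
    have hop := mccarthy_op A hA ((1-p).toNNReal * lam ^ p) (p.toNNReal * lam ^ (p-1)) p hp0
      (fun t _ => mccarthy_scalar p hp0 hp1 lam hlam t)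
    have h2 := mccarthy_inner_le _ _ hop x
    rw [mccarthy_inner_eq] at h2
    refine h2.trans_eq ?_
    push_cast [NNReal.coe_rpow, Real.coe_toNNReal _ h1p, Real.coe_toNNReal _ hp0.le]
    ring
  rcases eq_or_ne x 0 with hx | hx
  · simp [hx, hc, Real.zero_rpow (show 2*(1-p) ≠ 0 by nlinarith), Real.zero_rpow hp0.ne']
  have hn : (0:ℝ) < ‖x‖ ^ 2 := pow_pos (norm_pos_iff.mpr hx) 2
  rcases hc0.eq_or_lt with hceq | hcpos
  · -- c = 0
    rw [← hceq, Real.zero_rpow hp0.ne', mul_zero]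
    have htend : Filter.Tendsto (fun l : ℝ => (1-p) * l ^ p * ‖x‖ ^ 2 + p * l ^ (p-1) * c)
        (nhdsWithin 0 (Set.Ioi 0)) (nhds 0) := by
      rw [← hceq]
      simp only [mul_zero, add_zero]
      have h1 : Filter.Tendsto (fun l : ℝ => l ^ p) (nhdsWithin 0 (Set.Ioi 0)) (nhds 0) := by
        have := (Real.continuousAt_rpow_const 0 p (Or.inr hp0.le)).continuousWithinAt
          (s := Set.Ioi 0)
        simpa [Real.zero_rpow hp0.ne', ContinuousWithinAt] using this
      have := (h1.const_mul (1-p)).mul_const (‖x‖ ^ 2)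
      simpa using this
    refine ge_of_tendsto htend ?_
    filter_upwards [self_mem_nhdsWithin] with l hl
    have hl' : (0:ℝ) < l := hl
    have := key l.toNNReal (by simpa using hl')
    simpa [Real.coe_toNNReal _ hl'.le] using this
  · -- c > 0
    set n : ℝ := ‖x‖ ^ 2 with hndef
    have hlam : (0:ℝ) < c / n := div_pos hcpos hn
    have hk := key (c / n).toNNReal (by simpa using hlam)
    rw [Real.coe_toNNReal _ hlam.le] at hk
    refine hk.trans_eq ?_
    have hnorm : ‖x‖ ^ (2 * (1 - p)) = n ^ (1 - p) := by
      rw [hndef, ← Real.rpow_natCast ‖x‖ 2, ← Real.rpow_mul (norm_nonneg x)]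
      norm_num
    rw [hnorm, Real.div_rpow hc0 hn.le, Real.div_rpow hc0 hn.le]
    have hnp : (0:ℝ) < n ^ p := Real.rpow_pos_of_pos hn p
    have hcp : (0:ℝ) < c ^ p := Real.rpow_pos_of_pos hcpos p
    have e1 : c ^ (p-1) = c ^ p / c := by
      rw [Real.rpow_sub hcpos, Real.rpow_one]
    have e2 : n ^ (p-1) = n ^ p / n := by
      rw [Real.rpow_sub hn, Real.rpow_one]
    have e3 : n ^ (1-p) = n / n ^ p := by
      rw [Real.rpow_sub hn, Real.rpow_one]
    rw [e1, e2, e3]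
    field_simp
    ring
end

section
/- Let A be a positive bounded operator on a complex Hilbert space H, p ≥ 2, and x, y unit vectors in H. Then ⟨A x, x⟩^p ⟨A y, y⟩^p ≤ [⟨A^p x, x⟩ − ⟨|A − ⟨A x, x⟩ I|^p x, x⟩] · [⟨A^p y, y⟩ − ⟨|A − ⟨A y, y⟩ I|^p y, y⟩] ≤ ⟨A^p x, x⟩ ⟨A^p y, y⟩. -/
open scoped InnerProductSpace NNReal

open Set in
private lemma rpow_superadd {u v q : ℝ} (hu : 0 ≤ u) (hv : 0 ≤ v) (hq : 1 ≤ q) :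
    u ^ q + v ^ q ≤ (u + v) ^ q := by
  have h := NNReal.add_rpow_le_rpow_add u.toNNReal v.toNNReal hq
  rw [← NNReal.coe_le_coe] at h
  push_cast at h
  simpa [Real.coe_toNNReal _ hu, Real.coe_toNNReal _ hv] using h

private lemma cont_rpow {q : ℝ} (hq : 0 < q) : Continuous fun s : ℝ => s ^ q :=
  continuous_iff_continuousAt.2 fun t => Real.continuousAt_rpow_const t q (Or.inr hq.le)

open Set in
private lemma key_scalar {p a : ℝ} (hp : 2 ≤ p) (ha : 0 ≤ a) {t : ℝ} (ht : 0 ≤ t) :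
    a ^ p + p * a ^ (p - 1) * (t - a) + |t - a| ^ p ≤ t ^ p := by
  have hp0 : (0:ℝ) < p := by linarith
  have hp1 : (1:ℝ) ≤ p - 1 := by linarith
  set c := p * a ^ (p - 1) with hc
  rcases le_or_gt a t with h | h
  · -- t ≥ a
    rw [abs_of_nonneg (by linarith)]
    have hmono : MonotoneOn (fun s : ℝ => s ^ p - (s - a) ^ p - c * s) (Ici a) := by
      have hd : ∀ s ∈ interior (Ici a),
          HasDerivAt (fun s : ℝ => s ^ p - (s - a) ^ p - c * s)
            (p * s ^ (p - 1) - 1 * p * (s - a) ^ (p - 1) - c) s := by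
        intro s hs
        rw [interior_Ici] at hs
        have h1 : HasDerivAt (fun s : ℝ => s ^ p) (p * s ^ (p - 1)) s :=
          Real.hasDerivAt_rpow_const (Or.inr (by linarith))
        have h2 : HasDerivAt (fun s : ℝ => (s - a) ^ p) (1 * p * (s - a) ^ (p - 1)) s :=
          ((hasDerivAt_id s).sub_const a).rpow_const (Or.inr (by linarith))
        have h3 : HasDerivAt (fun s : ℝ => c * s) c s := by
          simpa using (hasDerivAt_id s).const_mul c
        exact (h1.sub h2).sub h3
      refine monotoneOn_of_deriv_nonneg (convex_Ici a) ?_ ?_ ?_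
      · exact (((cont_rpow hp0).sub ((cont_rpow hp0).comp (continuous_id.sub
          continuous_const))).sub (continuous_const.mul continuous_id)).continuousOn
      · exact fun s hs => (hd s hs).differentiableAt.differentiableWithinAt
      · intro s hs
        rw [(hd s hs).deriv]
        rw [interior_Ici] at hs
        have hsa : a ≤ s := le_of_lt hs
        have hsup : (s - a) ^ (p - 1) + a ^ (p - 1) ≤ s ^ (p - 1) := by
          have := rpow_superadd (sub_nonneg.2 hsa) ha hp1
          simpa using this
        have := mul_le_mul_of_nonneg_left hsup hp0.le
        rw [hc]; nlinarith
    have hkey := hmono (self_mem_Ici) (mem_Ici.2 h) h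
    simp only [sub_self, Real.zero_rpow (ne_of_gt hp0)] at hkey
    nlinarith [hkey]
  · -- t < a, so a > 0
    have ha0 : 0 < a := lt_of_le_of_lt ht h
    rw [abs_of_nonpos (by linarith), neg_sub]
    have hanti : AntitoneOn (fun s : ℝ => s ^ p - (a - s) ^ p - c * s) (Icc 0 a) := by
      have hd : ∀ s ∈ interior (Icc (0:ℝ) a),
          HasDerivAt (fun s : ℝ => s ^ p - (a - s) ^ p - c * s)
            (p * s ^ (p - 1) - (-1) * p * (a - s) ^ (p - 1) - c) s := by
        intro s hs
        rw [interior_Icc] at hs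
        have h1 : HasDerivAt (fun s : ℝ => s ^ p) (p * s ^ (p - 1)) s :=
          Real.hasDerivAt_rpow_const (Or.inr (by linarith))
        have h2 : HasDerivAt (fun s : ℝ => (a - s) ^ p) ((-1) * p * (a - s) ^ (p - 1)) s :=
          ((hasDerivAt_id s).const_sub a).rpow_const (Or.inr (by linarith))
        have h3 : HasDerivAt (fun s : ℝ => c * s) c s := by
          simpa using (hasDerivAt_id s).const_mul c
        exact (h1.sub h2).sub h3
      refine antitoneOn_of_deriv_nonpos (convex_Icc 0 a) ?_ ?_ ?_
      · exact (((cont_rpow hp0).sub ((cont_rpow hp0).comp (continuous_const.sub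
          continuous_id))).sub (continuous_const.mul continuous_id)).continuousOn
      · exact fun s hs => (hd s hs).differentiableAt.differentiableWithinAt
      · intro s hs
        rw [(hd s hs).deriv]
        rw [interior_Icc] at hs
        have hsup : s ^ (p - 1) + (a - s) ^ (p - 1) ≤ a ^ (p - 1) := by
          have := rpow_superadd hs.1.le (sub_nonneg.2 hs.2.le) hp1
          simpa using this
        have := mul_le_mul_of_nonneg_left hsup hp0.le
        rw [hc]; nlinarith
    have hkey := hanti (mem_Icc.2 ⟨ht, h.le⟩) (mem_Icc.2 ⟨ha, le_rfl⟩) h.le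
    simp only [sub_self, Real.zero_rpow (ne_of_gt hp0)] at hkey
    nlinarith [hkey]

section Operator

variable {H : Type*} [NormedAddCommGroup H] [InnerProductSpace ℂ H] [CompleteSpace H]

private lemma inner_re_nonneg {S : H →L[ℂ] H} (hS : 0 ≤ S) (x : H) :
    0 ≤ (⟪S x, x⟫_ℂ).re := by
  have := ((ContinuousLinearMap.nonneg_iff_isPositive S).1 hS).inner_nonneg_left x
  exact (Complex.nonneg_iff.1 this).1

private lemma inner_re_mono {S S' : H →L[ℂ] H} (h : S ≤ S') (x : H) :
    (⟪S x, x⟫_ℂ).re ≤ (⟪S' x, x⟫_ℂ).re := by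
  have := inner_re_nonneg (sub_nonneg.2 h) x
  simp only [ContinuousLinearMap.sub_apply, inner_sub_left, Complex.sub_re] at this
  linarith

private lemma smul_one_eq (a : ℝ) : ((a : ℂ) • (1 : H →L[ℂ] H)) = algebraMap ℝ (H →L[ℂ] H) a := by
  rw [Algebra.algebraMap_eq_smul_one, ← algebraMap_smul ℂ a (1 : H →L[ℂ] H)]
  norm_num

private lemma sub_smul_eq_cfc {A : H →L[ℂ] H} (hA : 0 ≤ A) (a : ℝ) :
    A - (a : ℂ) • 1 = cfc (fun t : ℝ => t - a) A := by
  have hsa : IsSelfAdjoint A := .of_nonneg hA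
  rw [cfc_sub (fun t : ℝ => t) (fun _ : ℝ => a) A, cfc_id' ℝ A, cfc_const a A, smul_one_eq]

private lemma rpow_eq_cfc_real {A : H →L[ℂ] H} (hA : 0 ≤ A) {p : ℝ} (hp : 0 < p) :
    CFC.rpow A p = cfc (fun t : ℝ => t ^ p) A := by
  rw [show CFC.rpow A p = cfc (fun s : ℝ≥0 => s ^ p) A from rfl,
    cfc_nnreal_eq_real (fun s : ℝ≥0 => s ^ p) A hA]
  apply cfc_congr
  intro t ht
  have htn : 0 ≤ t := spectrum_nonneg_of_nonneg hA ht
  simp [NNReal.coe_rpow, Real.coe_toNNReal t htn]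

private lemma absPow_eq_cfc {A : H →L[ℂ] H} (hA : 0 ≤ A) (a : ℝ) {p : ℝ} (hp : 0 < p) :
    CFC.rpow (CFC.sqrt (star (A - (a : ℂ) • 1) * (A - (a : ℂ) • 1))) p
      = cfc (fun t : ℝ => |t - a| ^ p) A := by
  have hsa : IsSelfAdjoint A := .of_nonneg hA
  have hT : A - (a : ℂ) • 1 = cfc (fun t : ℝ => t - a) A := sub_smul_eq_cfc hA a
  have hTsa : IsSelfAdjoint (A - (a : ℂ) • 1) := by
    rw [hT]; exact cfc_predicate (fun t : ℝ => t - a) A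
  have habs : Continuous (fun t : ℝ => |t - a|) := by fun_prop
  have hB : (0 : H →L[ℂ] H) ≤ cfc (fun t : ℝ => |t - a|) A :=
    cfc_nonneg (fun t _ => abs_nonneg _)
  have hBB : cfc (fun t : ℝ => |t - a|) A * cfc (fun t : ℝ => |t - a|) A
      = star (A - (a : ℂ) • 1) * (A - (a : ℂ) • 1) := by
    rw [hTsa.star_eq, hT, ← cfc_mul _ _ A, ← cfc_mul _ _ A]
    exact cfc_congr fun t _ => (abs_mul_abs_self _)
  rw [← hBB, CFC.sqrt_mul_self _ hB,
    show CFC.rpow (cfc (fun t : ℝ => |t - a|) A) p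
        = cfc (fun s : ℝ≥0 => s ^ p) (cfc (fun t : ℝ => |t - a|) A) from rfl,
    cfc_nnreal_eq_real (fun s : ℝ≥0 => s ^ p) _ hB,
    ← cfc_comp' (fun s : ℝ => ((s.toNNReal : ℝ≥0) ^ p : ℝ≥0) : ℝ → ℝ) (fun t : ℝ => |t - a|) A
      (by exact (NNReal.continuous_coe.comp ((NNReal.continuous_rpow_const hp.le).comp
        continuous_real_toNNReal)).continuousOn) habs.continuousOn]
  apply cfc_congr
  intro t _
  simp [NNReal.coe_rpow, Real.coe_toNNReal _ (abs_nonneg (t - a))]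

private lemma re_inner_real_smul (c : ℝ) (u x : H) :
    (⟪(c : ℝ) • u, x⟫_ℂ).re = c * (⟪u, x⟫_ℂ).re := by
  rw [← algebraMap_smul ℂ c u, Complex.coe_algebraMap, inner_smul_left]
  simp

private lemma re_inner_affine (r c : ℝ) (A F : H →L[ℂ] H) (x : H) (hx : ‖x‖ = 1) :
    (⟪(algebraMap ℝ (H →L[ℂ] H) r + c • A + F) x, x⟫_ℂ).re
      = r + c * (⟪A x, x⟫_ℂ).re + (⟪F x, x⟫_ℂ).re := by
  have h1 : (⟪(x:H), x⟫_ℂ).re = 1 := by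
    rw [inner_self_eq_norm_sq_to_K]; simp [hx]
  simp only [ContinuousLinearMap.add_apply, inner_add_left, Complex.add_re,
    Algebra.algebraMap_eq_smul_one, ContinuousLinearMap.smul_apply,
    ContinuousLinearMap.one_apply, re_inner_real_smul, h1, mul_one]

private lemma bracket {A : H →L[ℂ] H} (hA : 0 ≤ A) {p : ℝ} (hp : 2 ≤ p) {x : H}
    (hx : ‖x‖ = 1) :
    (⟪A x, x⟫_ℂ).re ^ p
        + (⟪(CFC.rpow (CFC.sqrt (star (A - ((⟪A x, x⟫_ℂ).re : ℂ) • 1)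
            * (A - ((⟪A x, x⟫_ℂ).re : ℂ) • 1))) p) x, x⟫_ℂ).re
      ≤ (⟪(CFC.rpow A p) x, x⟫_ℂ).re ∧
    0 ≤ (⟪(CFC.rpow (CFC.sqrt (star (A - ((⟪A x, x⟫_ℂ).re : ℂ) • 1)
            * (A - ((⟪A x, x⟫_ℂ).re : ℂ) • 1))) p) x, x⟫_ℂ).re ∧
    0 ≤ (⟪A x, x⟫_ℂ).re := by
  have hsa : IsSelfAdjoint A := .of_nonneg hA
  set a : ℝ := (⟪A x, x⟫_ℂ).re with ha_def
  have ha : 0 ≤ a := inner_re_nonneg hA x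
  have hp0 : (0:ℝ) < p := by linarith
  set c : ℝ := p * a ^ (p - 1) with hc
  have hca : c * a = p * a ^ p := by
    rcases eq_or_lt_of_le ha with h0 | h0
    · simp [hc, ← h0, Real.zero_rpow (by linarith : p - 1 ≠ 0),
        Real.zero_rpow (ne_of_gt hp0)]
    · rw [hc, mul_assoc, ← Real.rpow_add_one (ne_of_gt h0)]
      norm_num
  have hFcont : Continuous fun t : ℝ => |t - a| ^ p :=
    (cont_rpow hp0).comp (by fun_prop)
  have haffcont : Continuous fun t : ℝ => (1 - p) * a ^ p + c * t := by fun_prop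
  have hFpos : (0 : H →L[ℂ] H) ≤ cfc (fun t : ℝ => |t - a| ^ p) A :=
    cfc_nonneg fun t _ => Real.rpow_nonneg (abs_nonneg _) p
  have habsPow : CFC.rpow (CFC.sqrt (star (A - (a : ℂ) • 1) * (A - (a : ℂ) • 1))) p
      = cfc (fun t : ℝ => |t - a| ^ p) A := absPow_eq_cfc hA a hp0
  have hle : cfc (fun t : ℝ => ((1 - p) * a ^ p + c * t) + |t - a| ^ p) A
      ≤ cfc (fun t : ℝ => t ^ p) A := by
    refine cfc_mono (fun t ht => ?_) (haffcont.add hFcont).continuousOn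
      (cont_rpow hp0).continuousOn
    have h0t : 0 ≤ t := spectrum_nonneg_of_nonneg hA ht
    have hk := key_scalar hp ha h0t
    rw [hc] at hca ⊢
    nlinarith [hk]
  have hsplit : cfc (fun t : ℝ => ((1 - p) * a ^ p + c * t) + |t - a| ^ p) A
      = algebraMap ℝ (H →L[ℂ] H) ((1 - p) * a ^ p) + c • A
        + cfc (fun t : ℝ => |t - a| ^ p) A := by
    rw [cfc_add A _ _ haffcont.continuousOn hFcont.continuousOn]
    congr 1
    rw [cfc_add A _ _ (by fun_prop) (by fun_prop), cfc_const _ A, cfc_const_mul_id c A]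
  have hEF := inner_re_mono hle x
  rw [hsplit, re_inner_affine _ _ _ _ _ hx] at hEF
  have hF0 : 0 ≤ (⟪(cfc (fun t : ℝ => |t - a| ^ p) A) x, x⟫_ℂ).re :=
    inner_re_nonneg hFpos x
  refine ⟨?_, ?_, ha⟩
  · rw [habsPow, rpow_eq_cfc_real hA hp0]
    nlinarith [hEF]
  · rw [habsPow]
    exact hF0

end Operator

/-- Refined Cauchy–Schwarz inequality for quadratic forms of a positive operator
(`p ≥ 2`, `x`, `y` unit vectors):
`⟨Ax,x⟩^p ⟨Ay,y⟩^p ≤ [⟨A^p x,x⟩ − ⟨|A − ⟨Ax,x⟩I|^p x,x⟩]·[⟨A^p y,y⟩ − ⟨|A − ⟨Ay,y⟩I|^p y,y⟩]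
  ≤ ⟨A^p x,x⟩ ⟨A^p y,y⟩`. -/
theorem refined_cauchy_schwarz {H : Type*} [NormedAddCommGroup H]
    [InnerProductSpace ℂ H] [CompleteSpace H] (A : H →L[ℂ] H) (hA : 0 ≤ A)
    (p : ℝ) (hp : 2 ≤ p) (x y : H) (hx : ‖x‖ = 1) (hy : ‖y‖ = 1) :
    (let absPow : (H →L[ℂ] H) → ℝ → (H →L[ℂ] H) :=
      fun T q => CFC.rpow (CFC.sqrt (star T * T)) q
    (⟪A x, x⟫_ℂ).re ^ p * (⟪A y, y⟫_ℂ).re ^ p ≤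
      ((⟪(CFC.rpow A p) x, x⟫_ℂ).re -
        (⟪(absPow (A - ((⟪A x, x⟫_ℂ).re : ℂ) • (1 : H →L[ℂ] H)) p) x, x⟫_ℂ).re) *
      ((⟪(CFC.rpow A p) y, y⟫_ℂ).re -
        (⟪(absPow (A - ((⟪A y, y⟫_ℂ).re : ℂ) • (1 : H →L[ℂ] H)) p) y, y⟫_ℂ).re) ∧
    ((⟪(CFC.rpow A p) x, x⟫_ℂ).re -
        (⟪(absPow (A - ((⟪A x, x⟫_ℂ).re : ℂ) • (1 : H →L[ℂ] H)) p) x, x⟫_ℂ).re) *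
      ((⟪(CFC.rpow A p) y, y⟫_ℂ).re -
        (⟪(absPow (A - ((⟪A y, y⟫_ℂ).re : ℂ) • (1 : H →L[ℂ] H)) p) y, y⟫_ℂ).re) ≤
      (⟪(CFC.rpow A p) x, x⟫_ℂ).re * (⟪(CFC.rpow A p) y, y⟫_ℂ).re) := by
  obtain ⟨hx1, hx2, hx3⟩ := bracket hA hp hx
  obtain ⟨hy1, hy2, hy3⟩ := bracket hA hp hy
  have hxap : 0 ≤ (⟪A x, x⟫_ℂ).re ^ p := Real.rpow_nonneg hx3 p
  have hyap : 0 ≤ (⟪A y, y⟫_ℂ).re ^ p := Real.rpow_nonneg hy3 p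
  refine ⟨?_, ?_⟩
  · exact mul_le_mul (by linarith) (by linarith) hyap (by linarith)
  · exact mul_le_mul (by linarith) (by linarith) (by linarith) (by linarith)
end

section
/- Let T = [[0, B],[C, 0]] on H₁ ⊕ H₂. Then for any α ∈ [0,1] and p ≥ 1: ber(T)^p ≤ (1/4)‖|B|^(2pα) + |B|^(2p(1-α))‖ + (1/4)‖|C|^(2pα) + |C|^(2p(1-α))‖. -/
set_option maxHeartbeats 1000000
set_option synthInstance.maxHeartbeats 400000

open scoped InnerProductSpace

open scoped NNReal in
/-- Convexity of `t ^ p` for `p ≥ 1`: the mean inequality for two points. -/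
lemma half_add_rpow_aux {b c : ℝ} (hb : 0 ≤ b) (hc : 0 ≤ c) {p : ℝ} (hp : 1 ≤ p) :
    ((b + c) / 2) ^ p ≤ (b ^ p + c ^ p) / 2 := by
  lift b to ℝ≥0 using hb
  lift c to ℝ≥0 using hc
  have key := NNReal.rpow_arith_mean_le_arith_mean2_rpow (1/2) (1/2) b c (add_halves 1) hp
  have h := NNReal.coe_le_coe.2 key
  push_cast [NNReal.coe_rpow] at h
  rw [show (1/2 * (b:ℝ) + 1/2 * (c:ℝ)) = ((b:ℝ) + c)/2 by ring] at h
  linarith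

open scoped NNReal in
/-- For a nonneg operator `a` and exponents `u + v = 2p`, `2‖a‖^p ≤ ‖a^u + a^v‖`. -/
lemma key_cstar_aux {H : Type*} [NormedAddCommGroup H] [InnerProductSpace ℂ H] [CompleteSpace H]
    (a : H →L[ℂ] H) (ha : 0 ≤ a) {p u v : ℝ} (hu : 0 ≤ u) (hv : 0 ≤ v)
    (huv : u + v = 2 * p) (hp : 1 ≤ p) :
    2 * ‖a‖ ^ p ≤ ‖CFC.rpow a u + CFC.rpow a v‖ := by
  rcases subsingleton_or_nontrivial H with hH | hH
  · have : a = 0 := Subsingleton.elim a 0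
    rw [this, norm_zero, Real.zero_rpow (by linarith), mul_zero]
    exact norm_nonneg _
  · have hnt : Nontrivial (H →L[ℂ] H) := ⟨1, 0, by
      intro h
      obtain ⟨x, hx⟩ := exists_ne (0 : H)
      exact hx (by simpa using DFunLike.congr_fun h x)⟩
    have hcu : ContinuousOn (fun x : ℝ≥0 => x ^ u) (spectrum ℝ≥0 a) :=
      (NNReal.continuous_rpow_const hu).continuousOn
    have hcv : ContinuousOn (fun x : ℝ≥0 => x ^ v) (spectrum ℝ≥0 a) :=
      (NNReal.continuous_rpow_const hv).continuousOn
    have hsum : CFC.rpow a u + CFC.rpow a v = cfc (fun x : ℝ≥0 => x ^ u + x ^ v) a := by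
      rw [cfc_add (a := a) _ _ hcu hcv]; rfl
    have hmem : ‖a‖₊ ∈ spectrum ℝ≥0 a := CStarAlgebra.nnnorm_mem_spectrum_of_nonneg ha
    have hmem2 : (‖a‖₊ ^ u + ‖a‖₊ ^ v) ∈ spectrum ℝ≥0 (cfc (fun x : ℝ≥0 => x ^ u + x ^ v) a) := by
      rw [cfc_map_spectrum (R := ℝ≥0) (fun x : ℝ≥0 => x ^ u + x ^ v) a ha (hcu.add hcv)]
      exact ⟨‖a‖₊, hmem, rfl⟩
    have hmem3 := spectrum.algebraMap_mem ℝ hmem2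
    rw [NNReal.algebraMap_eq_coe] at hmem3
    have hle : ((‖a‖₊ ^ u + ‖a‖₊ ^ v : ℝ≥0) : ℝ) ≤ ‖cfc (fun x : ℝ≥0 => x ^ u + x ^ v) a‖ := by
      have := spectrum.norm_le_norm_of_mem hmem3
      rwa [Real.norm_of_nonneg (NNReal.coe_nonneg _)] at this
    rw [hsum]
    refine le_trans ?_ hle
    push_cast [NNReal.coe_rpow]
    have hN : (0:ℝ) ≤ ‖a‖ := norm_nonneg a
    have h1 : ‖a‖ ^ p = ‖a‖ ^ (u/2) * ‖a‖ ^ (v/2) := by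
      rw [← Real.rpow_add' hN (by linarith)]
      congr 1; linarith
    have h2 : (‖a‖ ^ (u/2)) ^ (2:ℕ) = ‖a‖ ^ u := by
      rw [← Real.rpow_natCast (‖a‖ ^ (u/2)) 2, ← Real.rpow_mul hN]
      norm_num
    have h3 : (‖a‖ ^ (v/2)) ^ (2:ℕ) = ‖a‖ ^ v := by
      rw [← Real.rpow_natCast (‖a‖ ^ (v/2)) 2, ← Real.rpow_mul hN]
      norm_num
    have := two_mul_le_add_sq (‖a‖ ^ (u/2)) (‖a‖ ^ (v/2))
    rw [h1]
    nlinarith [this, h2, h3]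

/-- The norm of `|B| = sqrt (B† B)` equals the norm of `B`. -/
lemma norm_abs_eq_aux {H K : Type*} [NormedAddCommGroup H] [InnerProductSpace ℂ H]
    [CompleteSpace H] [NormedAddCommGroup K] [InnerProductSpace ℂ K] [CompleteSpace K]
    (B : K →L[ℂ] H) : ‖CFC.sqrt ((ContinuousLinearMap.adjoint B) ∘L B)‖ = ‖B‖ := by
  have hBB : (0 : K →L[ℂ] K) ≤ (ContinuousLinearMap.adjoint B) ∘L B := by
    rw [ContinuousLinearMap.nonneg_iff_isPositive]
    exact ContinuousLinearMap.isPositive_adjoint_comp_self B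
  set s := CFC.sqrt ((ContinuousLinearMap.adjoint B) ∘L B) with hs
  have hsnn : 0 ≤ s := CFC.sqrt_nonneg _
  have hsq : s * s = (ContinuousLinearMap.adjoint B) ∘L B := CFC.sqrt_mul_sqrt_self _ hBB
  have h1 : ‖s‖ * ‖s‖ = ‖B‖ * ‖B‖ := by
    calc ‖s‖ * ‖s‖ = ‖star s * s‖ := (CStarRing.norm_star_mul_self).symm
    _ = ‖s * s‖ := by rw [(IsSelfAdjoint.of_nonneg hsnn).star_eq]
    _ = ‖(ContinuousLinearMap.adjoint B) ∘L B‖ := by rw [hsq]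
    _ = ‖B‖ * ‖B‖ := ContinuousLinearMap.norm_adjoint_comp_self B
  nlinarith [norm_nonneg s, norm_nonneg B]

/-- For `T = [[0, B],[C, 0]]` on `H₁ ⊕ H₂`, `α ∈ [0,1]` and `p ≥ 1`:
`ber(T)^p ≤ (1/4)‖|B|^(2pα) + |B|^(2p(1-α))‖ + (1/4)‖|C|^(2pα) + |C|^(2p(1-α))‖`. -/
theorem ber_offdiag_pow_le {H₁ H₂ : Type*}
    [NormedAddCommGroup H₁] [InnerProductSpace ℂ H₁] [CompleteSpace H₁]
    [NormedAddCommGroup H₂] [InnerProductSpace ℂ H₂] [CompleteSpace H₂]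
    {Ω : Type*} (k : Ω → WithLp 2 (H₁ × H₂)) (hk : ∀ lam, ‖k lam‖ = 1)
    (B : H₂ →L[ℂ] H₁) (C : H₁ →L[ℂ] H₂)
    (T : WithLp 2 (H₁ × H₂) →L[ℂ] WithLp 2 (H₁ × H₂))
    (hT : ∀ z, T z = (WithLp.equiv 2 (H₁ × H₂)).symm
      (B (WithLp.equiv 2 (H₁ × H₂) z).2, C (WithLp.equiv 2 (H₁ × H₂) z).1))
    (α p : ℝ) (hα : α ∈ Set.Icc (0 : ℝ) 1) (hp : 1 ≤ p) :
    (let absB : H₂ →L[ℂ] H₂ := CFC.sqrt ((ContinuousLinearMap.adjoint B) ∘L B)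
     let absC : H₁ →L[ℂ] H₁ := CFC.sqrt ((ContinuousLinearMap.adjoint C) ∘L C)
     (⨆ lam, ‖⟪T (k lam), k lam⟫_ℂ‖) ^ p ≤
      (1 / 4) * ‖CFC.rpow absB (2 * p * α) + CFC.rpow absB (2 * p * (1 - α))‖ +
      (1 / 4) * ‖CFC.rpow absC (2 * p * α) + CFC.rpow absC (2 * p * (1 - α))‖) := by
  intro absB absC
  obtain ⟨hα0, hα1⟩ := hα
  have hp0 : (0:ℝ) < p := lt_of_lt_of_le one_pos hp
  -- pointwise bound on the Berezin symbol
  have hbound : ∀ lam, ‖⟪T (k lam), k lam⟫_ℂ‖ ≤ (‖B‖ + ‖C‖) / 2 := by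
    intro lam
    set z := k lam with hz
    have hinner : ⟪T z, z⟫_ℂ = ⟪B z.snd, z.fst⟫_ℂ + ⟪C z.fst, z.snd⟫_ℂ := by
      rw [hT z, WithLp.prod_inner_apply]
      rfl
    have hnz : ‖z.fst‖ ^ 2 + ‖z.snd‖ ^ 2 = 1 := by
      have := WithLp.prod_norm_eq_of_L2 z
      rw [hk lam] at this
      have h2 : Real.sqrt (‖z.fst‖ ^ 2 + ‖z.snd‖ ^ 2) = 1 := this.symm
      nlinarith [Real.sq_sqrt (by positivity : (0:ℝ) ≤ ‖z.fst‖ ^ 2 + ‖z.snd‖ ^ 2)]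
    have h1 : ‖⟪B z.snd, z.fst⟫_ℂ‖ ≤ ‖B‖ * ‖z.snd‖ * ‖z.fst‖ := by
      refine le_trans ?_ (mul_le_mul_of_nonneg_right (B.le_opNorm z.snd) (norm_nonneg _))
      exact norm_inner_le_norm (𝕜 := ℂ) _ _
    have h2 : ‖⟪C z.fst, z.snd⟫_ℂ‖ ≤ ‖C‖ * ‖z.fst‖ * ‖z.snd‖ := by
      refine le_trans ?_ (mul_le_mul_of_nonneg_right (C.le_opNorm z.fst) (norm_nonneg _))
      exact norm_inner_le_norm (𝕜 := ℂ) _ _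
    calc ‖⟪T z, z⟫_ℂ‖
        ≤ ‖⟪B z.snd, z.fst⟫_ℂ‖ + ‖⟪C z.fst, z.snd⟫_ℂ‖ := by
          rw [hinner]; exact norm_add_le _ _
      _ ≤ (‖B‖ + ‖C‖) / 2 := by
          nlinarith [norm_nonneg z.fst, norm_nonneg z.snd, norm_nonneg B, norm_nonneg C,
            two_mul_le_add_sq ‖z.fst‖ ‖z.snd‖]
  have hBabs : ‖absB‖ = ‖B‖ := norm_abs_eq_aux B
  have hCabs : ‖absC‖ = ‖C‖ := norm_abs_eq_aux C
  have hu : (0:ℝ) ≤ 2 * p * α := by nlinarith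
  have hv : (0:ℝ) ≤ 2 * p * (1 - α) := by nlinarith
  have huv : 2 * p * α + 2 * p * (1 - α) = 2 * p := by ring
  have hkeyB : 2 * ‖B‖ ^ p ≤
      ‖CFC.rpow absB (2 * p * α) + CFC.rpow absB (2 * p * (1 - α))‖ := by
    have := key_cstar_aux absB (CFC.sqrt_nonneg _) hu hv huv hp
    rwa [hBabs] at this
  have hkeyC : 2 * ‖C‖ ^ p ≤
      ‖CFC.rpow absC (2 * p * α) + CFC.rpow absC (2 * p * (1 - α))‖ := by
    have := key_cstar_aux absC (CFC.sqrt_nonneg _) hu hv huv hp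
    rwa [hCabs] at this
  rcases isEmpty_or_nonempty Ω with hΩ | hΩ
  · rw [Real.iSup_of_isEmpty, Real.zero_rpow (by linarith)]
    have n1 : (0:ℝ) ≤ ‖CFC.rpow absB (2 * p * α) + CFC.rpow absB (2 * p * (1 - α))‖ :=
      norm_nonneg _
    have n2 : (0:ℝ) ≤ ‖CFC.rpow absC (2 * p * α) + CFC.rpow absC (2 * p * (1 - α))‖ :=
      norm_nonneg _
    linarith
  · have hbdd : BddAbove (Set.range fun lam => ‖⟪T (k lam), k lam⟫_ℂ‖) :=
      ⟨(‖B‖ + ‖C‖) / 2, by rintro _ ⟨lam, rfl⟩; exact hbound lam⟩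
    have hM0 : 0 ≤ ⨆ lam, ‖⟪T (k lam), k lam⟫_ℂ‖ :=
      le_trans (norm_nonneg _) (le_ciSup hbdd (Classical.arbitrary Ω))
    have hMle : (⨆ lam, ‖⟪T (k lam), k lam⟫_ℂ‖) ≤ (‖B‖ + ‖C‖) / 2 :=
      ciSup_le hbound
    calc (⨆ lam, ‖⟪T (k lam), k lam⟫_ℂ‖) ^ p
        ≤ ((‖B‖ + ‖C‖) / 2) ^ p := Real.rpow_le_rpow hM0 hMle (by linarith)
      _ ≤ (‖B‖ ^ p + ‖C‖ ^ p) / 2 := half_add_rpow_aux (norm_nonneg B) (norm_nonneg C) hp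
      _ ≤ _ := by linarith
end
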